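/- In the election constructed in the reduction for Schulze voter control —whose weighted majority graph has candidates B = {b_1,…,b_{3s}} ∪ {p,w} with D(p,w) = 2L, D(b_j,p) = 2L + 4s − 2 for each j, D(w,b_j) ≫ 2L, and all other margins 0 (where L ≫ s)— the candidate w is the unique Schulze winner. -/

import Mathlib

/-- A vote: a strict linear order on candidates, encoded by an injective ranking
(smaller rank = more preferred). -/
structure Vote (C : Type*) where
  rk : C → ℕ
  inj : Function.Injective rk

namespace Vote

/-- `v.Prefers c d` means the voter ranks `c` strictly above `d`. -/
def Prefers {C : Type*} (v : Vote C) (c d : C) : Prop := v.rk c < v.rk d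

instance {C : Type*} (v : Vote C) : DecidableRel v.Prefers :=
  fun c d => inferInstanceAs (Decidable (v.rk c < v.rk d))

end Vote

/-- `Ncount V c d`: the number of votes in `V` ranking `c` above `d`. -/
def Ncount {C : Type*} (V : List (Vote C)) (c d : C) : ℕ :=
  V.countP (fun v => decide (v.Prefers c d))

/-- The pairwise margin `D(c,d) = N(c,d) - N(d,c)`. -/
def margin {C : Type*} (V : List (Vote C)) (c d : C) : ℤ :=
  (Ncount V c d : ℤ) - (Ncount V d c : ℤ)

/-- `l` is a directed path from `c` to `d` using only vertices in `A`
(a list of at least two vertices starting at `c` and ending at `d`). -/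
def IsPathOn {C : Type*} (A : Set C) (c d : C) (l : List C) : Prop :=
  2 ≤ l.length ∧ l.head? = some c ∧ l.getLast? = some d ∧ ∀ x ∈ l, x ∈ A

/-- The strength of a path: the minimum margin along its consecutive edges. -/
def pathStrength {C : Type*} (D : C → C → ℤ) (l : List C) : ℤ :=
  (((l.zip l.tail).map fun p => D p.1 p.2).min?).getD 0

/-- The set of strengths of paths from `c` to `d` within `A`. -/
def strengths {C : Type*} (A : Set C) (D : C → C → ℤ) (c d : C) : Set ℤ :=
  {s | ∃ l : List C, IsPathOn A c d l ∧ pathStrength D l = s}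

/-- `P(c,d)`: the strength of a strongest path from `c` to `d` within `A`. -/
noncomputable def strongestPath {C : Type*} (A : Set C) (D : C → C → ℤ) (c d : C) : ℤ :=
  sSup (strengths A D c d)

/-- `c` is a Schulze winner among candidates `A` w.r.t. margins `D`. -/
def SchulzeWinnerOn {C : Type*} (A : Set C) (D : C → C → ℤ) (c : C) : Prop :=
  c ∈ A ∧ ∀ d ∈ A, d ≠ c → strongestPath A D d c ≤ strongestPath A D c d

/-- `c` is a Condorcet winner among candidates `A` for the votes `V`. -/
def CondorcetWinnerOn {C : Type*} (A : Set C) (V : List (Vote C)) (c : C) : Prop :=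
  c ∈ A ∧ ∀ d ∈ A, d ≠ c → 0 < margin V c d


section Aux
variable {C : Type*}

lemma min?_le'' (l : List ℤ) (a b : ℤ) (h : l.min? = some a) (hb : b ∈ l) : a ≤ b := by
  have : Std.Antisymm fun (x1 x2 : ℤ) => x1 ≤ x2 := ⟨@le_antisymm ℤ _⟩
  rw [List.min?_eq_some_iff] at h
  exact h.2 b hb

lemma pathStrength_le_edge (D : C → C → ℤ) (l : List C) (x y : C)
    (h : (x, y) ∈ l.zip l.tail) : pathStrength D l ≤ D x y := by
  have hmem : D x y ∈ (l.zip l.tail).map fun p => D p.1 p.2 :=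
    List.mem_map.2 ⟨(x, y), h, rfl⟩
  obtain ⟨m, hm⟩ : ∃ m, ((l.zip l.tail).map fun p => D p.1 p.2).min? = some m := by
    rcases h' : ((l.zip l.tail).map fun p => D p.1 p.2).min? with _ | m
    · rw [List.min?_eq_none_iff] at h'
      rw [h'] at hmem
      simp at hmem
    · exact ⟨m, h'⟩
  have := min?_le'' _ m (D x y) hm hmem
  simpa [pathStrength, hm] using this

lemma exists_first_pair (l : List C) (h : 2 ≤ l.length) :
    ∃ x y, (x, y) ∈ l.zip l.tail := by
  match l with
  | a :: b :: t => exact ⟨a, b, by simp⟩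
  | [] => simp at h
  | [a] => simp at h

lemma exists_last_pair : ∀ (l : List C) (d : C), 2 ≤ l.length → l.getLast? = some d →
    ∃ x, (x, d) ∈ l.zip l.tail := by
  intro l
  induction l with
  | nil => intro d h; simp at h
  | cons a t ih =>
    intro d hlen hlast
    cases t with
    | nil => simp at hlen
    | cons b t' =>
      cases t' with
      | nil =>
        simp at hlast
        subst hlast
        exact ⟨a, by simp⟩
      | cons c t'' =>
        rw [List.getLast?_cons_cons] at hlast
        obtain ⟨x, hx⟩ := ih d (by simp) hlast
        exact ⟨x, by rw [List.tail_cons, List.zip_cons_cons]; exact List.mem_cons_of_mem _ hx⟩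

lemma pathStrength_pair (D : C → C → ℤ) (a b : C) :
    pathStrength D [a, b] = D a b := by
  simp [pathStrength]

lemma pathStrength_triple (D : C → C → ℤ) (a b c : C) :
    pathStrength D [a, b, c] = min (D a b) (D b c) := by
  simp [pathStrength, List.min?_cons]

lemma isPathOn_pair (a b : C) : IsPathOn Set.univ a b [a, b] :=
  ⟨by simp, by simp, by simp, by simp⟩

lemma isPathOn_triple (a b c : C) : IsPathOn Set.univ a c [a, b, c] :=
  ⟨by simp, by simp, by simp, by simp⟩

end Aux

/-- In the weighted majority graph of the voter-control reduction — candidates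
`B ∪ {p, w}` with `|B| = 3s`, margins `D(p,w) = 2L`, `D(b,p) = 2L + 4s - 2` and
`D(w,b) = 10L` for every `b ∈ B`, all other margins `0` (skew-symmetric), `s ≥ 1`,
`L > 4s` — candidate `w` is the unique Schulze winner. -/
theorem w_unique_schulze_winner {C : Type*} [Fintype C] [DecidableEq C]
    (p w : C) (hpw : p ≠ w) (s L : ℕ) (hs : 1 ≤ s) (hL : 4 * s < L)
    (hcard : Fintype.card C = 3 * s + 2)
    (D : C → C → ℤ)
    (hskew : ∀ a b : C, D a b = - D b a)
    (hpwD : D p w = 2 * (L : ℤ))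
    (hbp : ∀ b : C, b ≠ p → b ≠ w → D b p = 2 * (L : ℤ) + 4 * (s : ℤ) - 2)
    (hwb : ∀ b : C, b ≠ p → b ≠ w → D w b = 10 * (L : ℤ))
    (hbb : ∀ a b : C, a ≠ p → a ≠ w → b ≠ p → b ≠ w → D a b = 0) :
    SchulzeWinnerOn Set.univ D w ∧
      ∀ c : C, SchulzeWinnerOn Set.univ D c → c = w := by
  have hL' : (4 : ℤ) * s < L := by exact_mod_cast hL
  have hs' : (1 : ℤ) ≤ s := by exact_mod_cast hs
  have hDself : ∀ a : C, D a a = 0 := fun a => by have := hskew a a; linarith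
  have hwpD : D w p = -(2 * (L : ℤ)) := by rw [hskew w p, hpwD]
  have hbw : ∀ b : C, b ≠ p → b ≠ w → D b w = -(10 * (L : ℤ)) := fun b h1 h2 => by
    rw [hskew b w, hwb b h1 h2]
  have hpb : ∀ b : C, b ≠ p → b ≠ w → D p b = -(2 * (L : ℤ) + 4 * (s : ℤ) - 2) := fun b h1 h2 => by
    rw [hskew p b, hbp b h1 h2]
  -- global edge bound
  have hDle : ∀ a b : C, D a b ≤ 10 * (L : ℤ) := by
    intro a b
    by_cases hap : a = p <;> by_cases haw : a = w <;>
      by_cases hbp' : b = p <;> by_cases hbw' : b = w <;>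
      subst_vars <;>
      first
      | (rw [hDself]; linarith)
      | (rw [hpwD]; linarith)
      | (rw [hwpD]; linarith)
      | (rw [hpb _ hbp' hbw']; linarith)
      | (rw [hbp _ hap haw]; linarith)
      | (rw [hwb _ hbp' hbw'])
      | (rw [hbw _ hap haw]; linarith)
      | (rw [hbb _ _ hap haw hbp' hbw']; linarith)
  -- edges into w bound
  have hDw : ∀ a : C, D a w ≤ 2 * (L : ℤ) := by
    intro a
    by_cases hap : a = p
    · subst hap; rw [hpwD]
    · by_cases haw : a = w
      · subst haw; rw [hDself]; linarith
      · rw [hbw a hap haw]; linarith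
  -- nonempty strengths
  have hne : ∀ c d : C, (strengths Set.univ D c d).Nonempty := fun c d =>
    ⟨pathStrength D [c, d], [c, d], isPathOn_pair c d, rfl⟩
  have hbdd : ∀ c d : C, BddAbove (strengths Set.univ D c d) := by
    intro c d
    refine ⟨10 * (L : ℤ), fun x hx => ?_⟩
    obtain ⟨l, hl, rfl⟩ := hx
    obtain ⟨a, b, hab⟩ := exists_first_pair l hl.1
    exact le_trans (pathStrength_le_edge D l a b hab) (hDle a b)
  -- upper bound on strongest path into w
  have hPtoW : ∀ c : C, strongestPath Set.univ D c w ≤ 2 * (L : ℤ) := by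
    intro c
    refine csSup_le (hne c w) fun x hx => ?_
    obtain ⟨l, hl, rfl⟩ := hx
    obtain ⟨a, hab⟩ := exists_last_pair l w hl.1 hl.2.2.1
    exact le_trans (pathStrength_le_edge D l a w hab) (hDw a)
  -- b0 exists
  obtain ⟨b0, hb0p, hb0w⟩ : ∃ b : C, b ≠ p ∧ b ≠ w := by
    have hsub : ({p, w} : Finset C) ⊆ Finset.univ := Finset.subset_univ _
    have hc2 : ({p, w} : Finset C).card = 2 := by
      rw [Finset.card_insert_of_notMem (by simpa using hpw), Finset.card_singleton]
    have hcard' : (Finset.univ \ ({p, w} : Finset C)).card = 3 * s := by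
      rw [Finset.card_sdiff_of_subset hsub, hc2, Finset.card_univ, hcard]
      omega
    have hpos : 0 < (Finset.univ \ ({p, w} : Finset C)).card := by omega
    obtain ⟨b, hb⟩ := Finset.card_pos.1 hpos
    simp only [Finset.mem_sdiff, Finset.mem_insert, Finset.mem_singleton] at hb
    exact ⟨b, fun h => hb.2 (Or.inl h), fun h => hb.2 (Or.inr h)⟩
  -- lower bound P(w,p)
  have hPwp : 2 * (L : ℤ) + 4 * (s : ℤ) - 2 ≤ strongestPath Set.univ D w p := by
    refine le_csSup (hbdd w p) ⟨[w, b0, p], isPathOn_triple w b0 p, ?_⟩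
    rw [pathStrength_triple, hwb b0 hb0p hb0w, hbp b0 hb0p hb0w]
    rw [min_eq_right (by linarith)]
  -- lower bound P(w,b)
  have hPwb : ∀ b : C, b ≠ p → b ≠ w → 10 * (L : ℤ) ≤ strongestPath Set.univ D w b := by
    intro b h1 h2
    refine le_csSup (hbdd w b) ⟨[w, b], isPathOn_pair w b, ?_⟩
    rw [pathStrength_pair, hwb b h1 h2]
  have hkey : ∀ d : C, d ≠ w → strongestPath Set.univ D d w + 1 ≤ strongestPath Set.univ D w d := by
    intro d hdw
    by_cases hdp : d = p
    · subst hdp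
      have := hPtoW d
      linarith
    · have := hPtoW d
      have := hPwb d hdp hdw
      linarith
  constructor
  · exact ⟨Set.mem_univ w, fun d _ hdw => by have := hkey d hdw; linarith⟩
  · intro c hc
    by_contra hcw
    have h1 := hc.2 w (Set.mem_univ w) (fun h => hcw h.symm)
    have h2 := hkey c hcw
    linarith
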